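/- If C is a linear code of length n over GF(q) whose monomial automorphism group contains a t-homogeneous subgroup (of permutation parts), then for every weight i ≥ t with A_i(C(q|q^ℓ)) ≠ 0, the supports of the weight-i codewords of the lifted code C(q|q^ℓ) form a t-design on n points. -/

import Mathlib

open Finset

/-- Hamming weight of a vector. -/
noncomputable def wt {ι R : Type*} [Fintype ι] [Zero R] (c : ι → R) : ℕ :=
  Set.ncard {j | c j ≠ 0}

/-- The lifted code `C(q|q^ℓ)`: the `E`-span of (the image in `E^n` of) a code `C ⊆ F^n`. -/
noncomputable def liftCode (F : Type*) {ι : Type*} (E : Type*) [Field F] [Field E] [Algebra F E]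
    (C : Submodule F (ι → F)) : Submodule E (ι → E) :=
  Submodule.span E ((fun c : ι → F => fun j => algebraMap F E (c j)) '' (C : Set (ι → F)))

/-- `A_i(C)`: the number of codewords of Hamming weight `i`. -/
noncomputable def numWt {ι R : Type*} [Fintype ι] [Semiring R] (C : Submodule R (ι → R)) (i : ℕ) : ℕ :=
  Set.ncard {c : ι → R | c ∈ C ∧ wt c = i}

/-- The set of supports of weight-`i` codewords of `C` (without repetition). -/
def codeSupports {ι R : Type*} [Fintype ι] [Semiring R] (C : Submodule R (ι → R)) (i : ℕ) :
    Set (Set ι) :=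
  {s | ∃ c, c ∈ C ∧ wt c = i ∧ s = {j | c j ≠ 0}}

/-- `C` has minimum Hamming distance `d`. -/
def IsMinDist {ι R : Type*} [Fintype ι] [Semiring R] (C : Submodule R (ι → R)) (d : ℕ) : Prop :=
  (∃ c, c ∈ C ∧ c ≠ 0 ∧ wt c = d) ∧ ∀ c, c ∈ C → c ≠ 0 → d ≤ wt c

/-- The dual code under the standard bilinear form. -/
def dualCode {ι R : Type*} [Fintype ι] [CommRing R] (C : Submodule R (ι → R)) :
    Submodule R (ι → R) where
  carrier := {x | ∀ c ∈ C, ∑ j, x j * c j = 0}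
  add_mem' := by
    intro a b ha hb c hc
    simp only [Set.mem_setOf_eq] at *
    simp [Pi.add_apply, add_mul, Finset.sum_add_distrib, ha c hc, hb c hc]
  zero_mem' := by intro c hc; simp
  smul_mem' := by
    intro a x hx c hc
    simp only [Set.mem_setOf_eq] at *
    simp [Pi.smul_apply, smul_eq_mul, mul_assoc, ← Finset.mul_sum, hx c hc]

/-- Evaluation of multivariate polynomials over `GF(2)` as a linear map. -/
noncomputable def evalLM (m : ℕ) :
    MvPolynomial (Fin m) (ZMod 2) →ₗ[ZMod 2] ((Fin m → ZMod 2) → ZMod 2) where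
  toFun := fun p x => MvPolynomial.eval x p
  map_add' := by intro p q; funext x; simp
  map_smul' := by intro a p; funext x; simp

/-- The binary Reed-Muller code `RM₂(r,m)`: evaluations of polynomials of total degree `≤ r`. -/
noncomputable def RM (r m : ℕ) : Submodule (ZMod 2) ((Fin m → ZMod 2) → ZMod 2) :=
  Submodule.map (evalLM m) (MvPolynomial.restrictTotalDegree (Fin m) (ZMod 2) r)


section Aux
variable {E : Type*} [Field E] {n : ℕ}

/-- Monomial linear equivalence given a diagonal of units and a permutation. -/
noncomputable def monEquiv (d : Fin n → Eˣ) (π : Equiv.Perm (Fin n)) :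
    (Fin n → E) ≃ₗ[E] (Fin n → E) where
  toFun c := fun j => (d j : E) * c (π j)
  invFun c := fun j => ((d (π.symm j))⁻¹ : Eˣ) * c (π.symm j)
  left_inv c := by funext j; simp [← mul_assoc]
  right_inv c := by funext j; simp [← mul_assoc]
  map_add' a b := by funext j; simp [mul_add]
  map_smul' r a := by funext j; simp [Pi.smul_apply, smul_eq_mul, mul_left_comm]

lemma monEquiv_support (d : Fin n → Eˣ) (π : Equiv.Perm (Fin n)) (c : Fin n → E) :
    {j | monEquiv d π c j ≠ 0} = ⇑π ⁻¹' {j | c j ≠ 0} := by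
  ext j
  simp [monEquiv, Units.mul_right_eq_zero]

lemma wt_monEquiv (d : Fin n → Eˣ) (π : Equiv.Perm (Fin n)) (c : Fin n → E) :
    wt (monEquiv d π c) = wt c := by
  unfold wt
  rw [monEquiv_support, ← Equiv.image_symm_eq_preimage,
    Set.ncard_image_of_injective _ π.symm.injective]

end Aux

section Aux2
variable {F E : Type*} [Field F] [Field E] [Algebra F E] {n : ℕ}

noncomputable def liftUnits (d : Fin n → Fˣ) : Fin n → Eˣ :=
  fun j => Units.map (algebraMap F E : F →* E) (d j)

lemma map_liftCode (C : Submodule F (Fin n → F)) (d : Fin n → Fˣ) (π : Equiv.Perm (Fin n))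
    (h : (fun c : Fin n → F => fun j => (d j : F) * c (π j)) '' (C : Set (Fin n → F)) = C) :
    Submodule.map (monEquiv (liftUnits (E := E) d) π).toLinearMap (liftCode F E C)
      = liftCode F E C := by
  unfold liftCode
  rw [Submodule.map_span]
  congr 1
  conv_rhs => rw [← h]
  rw [← Set.image_comp, ← Set.image_comp]
  have heq : (⇑(monEquiv (liftUnits (E := E) d) π) ∘ fun c : Fin n → F => fun j => algebraMap F E (c j))
      = (fun c : Fin n → F => fun j => algebraMap F E (c j))
        ∘ (fun c => fun j => (d j : F) * c (π j)) := by
    funext c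
    funext j
    simp [monEquiv, liftUnits, map_mul]
  exact congrArg₂ _ heq rfl

lemma mem_lift_iff (C : Submodule F (Fin n → F)) (d : Fin n → Fˣ) (π : Equiv.Perm (Fin n))
    (h : (fun c : Fin n → F => fun j => (d j : F) * c (π j)) '' (C : Set (Fin n → F)) = C)
    (c : Fin n → E) :
    monEquiv (liftUnits (E := E) d) π c ∈ liftCode F E C ↔ c ∈ liftCode F E C := by
  constructor
  · intro hc
    rw [← map_liftCode C d π h] at hc
    obtain ⟨x, hx, hxc⟩ := hc
    rwa [(monEquiv (liftUnits (E := E) d) π).injective hxc] at hx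
  · intro hc
    rw [← map_liftCode C d π h]
    exact ⟨c, hc, rfl⟩

lemma supports_transfer {F E : Type*} [Field F] [Field E] [Algebra F E] {n : ℕ}
    (C : Submodule F (Fin n → F)) (d : Fin n → Fˣ) (π : Equiv.Perm (Fin n))
    (h : (fun c : Fin n → F => fun j => (d j : F) * c (π j)) '' (C : Set (Fin n → F)) = C)
    (S T : Finset (Fin n)) (hST : S.image π = T) (i : ℕ) :
    {s ∈ codeSupports (liftCode F E C) i | ↑S ⊆ s}
      = (fun s => ⇑π ⁻¹' s) '' {s ∈ codeSupports (liftCode F E C) i | ↑T ⊆ s} := by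
  have hmem : ∀ c : Fin n → E,
      monEquiv (liftUnits (E := E) d) π c ∈ liftCode F E C ↔ c ∈ liftCode F E C :=
    mem_lift_iff C d π h
  set σ := monEquiv (liftUnits (E := E) d) π with hσ
  have hsupp : ∀ c : Fin n → E, {j | σ c j ≠ 0} = ⇑π ⁻¹' {j | c j ≠ 0} :=
    monEquiv_support _ π
  have hwt : ∀ c : Fin n → E, wt (σ c) = wt c := wt_monEquiv _ π
  ext s'
  constructor
  · rintro ⟨⟨c', hc', hw', rfl⟩, hSs'⟩
    refine ⟨{j | σ.symm c' j ≠ 0}, ⟨⟨σ.symm c', ?_, ?_, rfl⟩, ?_⟩, ?_⟩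
    · rw [← hmem, σ.apply_symm_apply]
      exact hc'
    · rw [← hw']
      conv_rhs => rw [← σ.apply_symm_apply c']
      exact (hwt (σ.symm c')).symm
    · intro j hj
      obtain ⟨j₀, hj₀S, rfl⟩ := Finset.mem_image.mp (hST ▸ hj)
      have hm : j₀ ∈ ⇑π ⁻¹' {j | σ.symm c' j ≠ 0} := by
        rw [← hsupp (σ.symm c'), σ.apply_symm_apply]
        exact hSs' hj₀S
      exact hm
    · show ⇑π ⁻¹' {j | σ.symm c' j ≠ 0} = {j | c' j ≠ 0}
      rw [← hsupp (σ.symm c'), σ.apply_symm_apply]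
  · rintro ⟨s, ⟨⟨c, hc, hw, rfl⟩, hTs⟩, rfl⟩
    refine ⟨⟨σ c, (hmem c).mpr hc, by rw [hwt c]; exact hw, (hsupp c).symm⟩, ?_⟩
    intro j hj
    exact hTs (hST ▸ Finset.mem_image_of_mem π hj)

end Aux2

/-- if the monomial automorphism group of `C` acts `t`-homogeneously (through
the permutation parts) on the coordinates, then for each `i ≥ t` with
`A_i(C(q|q^ℓ)) ≠ 0` the supports of the weight-`i` codewords of the lifted code form a
`t`-design. -/
theorem stmt7 {F E : Type*} [Field F] [Field E] [Algebra F E] {n t : ℕ}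
    (C : Submodule F (Fin n → F))
    (hhom : ∀ S T : Finset (Fin n), S.card = t → T.card = t →
      ∃ (d : Fin n → Fˣ) (π : Equiv.Perm (Fin n)),
        ((fun c : Fin n → F => fun j => (d j : F) * c (π j)) '' (C : Set (Fin n → F)) = C) ∧
        S.image π = T)
    (i : ℕ) (hi : t ≤ i) (hA : numWt (liftCode F E C) i ≠ 0) :
    ∃ lam : ℕ, 0 < lam ∧ ∀ T : Finset (Fin n), T.card = t →
      Set.ncard {s ∈ codeSupports (liftCode F E C) i | ↑T ⊆ s} = lam := by
  classical
  unfold numWt at hA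
  obtain ⟨c₀, hc₀, hw₀⟩ := Set.nonempty_of_ncard_ne_zero hA
  have hfin : ({j | c₀ j ≠ 0} : Set (Fin n)).Finite := Set.toFinite _
  have hcard : hfin.toFinset.card = i := by
    rw [← Set.ncard_eq_toFinset_card _ hfin]
    exact hw₀
  obtain ⟨T₀, hT₀sub, hT₀card⟩ := Finset.exists_subset_card_eq (hcard ▸ hi)
  refine ⟨Set.ncard {s ∈ codeSupports (liftCode F E C) i | ↑T₀ ⊆ s}, ?_, ?_⟩
  · rw [Set.ncard_pos (Set.toFinite _)]
    refine ⟨{j | c₀ j ≠ 0}, ⟨c₀, hc₀, hw₀, rfl⟩, ?_⟩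
    intro j hj
    have := hT₀sub hj
    rwa [Set.Finite.mem_toFinset] at this
  · intro T hT
    obtain ⟨d, π, himg, hST⟩ := hhom T₀ T hT₀card hT
    rw [supports_transfer C d π himg T₀ T hST i,
      Set.ncard_image_of_injective _ (Set.preimage_injective.mpr π.surjective)]
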